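/- Let I be a small category, F, G : I ⥤ Cat two functors with small-category values, and α : F ⟶ G a natural transformation such that for every object i of I the component α_i : F i ⥤ G i is an aspheric functor. Then the induced functor ∫α : ∫F ⥤ ∫G between Grothendieck constructions (sending (i, a) to (i, α_i(a))) is aspheric. -/

import Mathlib

open CategoryTheory Limits

namespace Paper

/-- A right asphericity structure: a class of small categories satisfying (As1): every
small category having a terminal object belongs to the class, and (As2): if `u : A ⥤ B`
is a functor with `B` in the class and all comma categories `A/b` in the class, then `A`
is in the class. -/
def IsRightAsphericityStructure (𝒜 : Set Cat.{0,0}) : Prop :=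
  (∀ C : Cat.{0,0}, HasTerminal C → C ∈ 𝒜) ∧
  (∀ (A B : Cat.{0,0}) (u : A ⥤ B), B ∈ 𝒜 →
    (∀ b : B, Cat.of (CostructuredArrow u b) ∈ 𝒜) → A ∈ 𝒜)

/-- A functor between small categories is aspheric (w.r.t. a class 𝒜 of small
categories) if all its comma categories `A/b` belong to 𝒜. -/
def Aspheric (𝒜 : Set Cat.{0,0}) {A B : Cat.{0,0}} (u : A ⥤ B) : Prop :=
  ∀ b : B, Cat.of (CostructuredArrow u b) ∈ 𝒜

variable {I : Cat.{0,0}} {F G : ↥I ⥤ Cat.{0,0}} (α : F ⟶ G) (b : Grothendieck G)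

lemma objEq {j : ↥I} (k : j ⟶ b.base) (a : F.obj j) :
    (α.app b.base).toFunctor.obj ((F.map k).toFunctor.obj a) =
      (G.map k).toFunctor.obj ((α.app j).toFunctor.obj a) :=
  congrArg (fun f => f.toFunctor.obj a) (α.naturality k)

lemma baseEq {c c' : CostructuredArrow (Grothendieck.map α) b} (ψ : c ⟶ c') :
    ψ.left.base ≫ c'.hom.base = c.hom.base :=
  congrArg Grothendieck.Hom.base (CostructuredArrow.w ψ)

lemma mapObjEq {c c' : CostructuredArrow (Grothendieck.map α) b} (ψ : c ⟶ c') :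
    (F.map c.hom.base).toFunctor.obj c.left.fiber =
      (F.map c'.hom.base).toFunctor.obj ((F.map ψ.left.base).toFunctor.obj c.left.fiber) := by
  rw [← baseEq α b ψ]
  exact congrArg (fun f => f.toFunctor.obj c.left.fiber) (F.map_comp ψ.left.base c'.hom.base)

lemma keyMap {j j' : ↥I} (x : F.obj j) (x' : F.obj j') (s : j ⟶ j')
    (φ : (F.map s).toFunctor.obj x ⟶ x') (k : j ⟶ b.base) (k' : j' ⟶ b.base) (hk : s ≫ k' = k)
    (g : (G.map k).toFunctor.obj ((α.app j).toFunctor.obj x) ⟶ b.fiber)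
    (g' : (G.map k').toFunctor.obj ((α.app j').toFunctor.obj x') ⟶ b.fiber)
    (h1 : (F.map k).toFunctor.obj x = (F.map k').toFunctor.obj ((F.map s).toFunctor.obj x))
    (h2 : (G.map (s ≫ k')).toFunctor.obj ((α.app j).toFunctor.obj x) =
      (G.map k').toFunctor.obj ((G.map s).toFunctor.obj ((α.app j).toFunctor.obj x)))
    (h3 : (G.map s).toFunctor.obj ((α.app j).toFunctor.obj x) =
      (α.app j').toFunctor.obj ((F.map s).toFunctor.obj x))
    (h4 : (G.map (s ≫ k')).toFunctor.obj ((α.app j).toFunctor.obj x) =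
      (G.map k).toFunctor.obj ((α.app j).toFunctor.obj x))
    (hw : eqToHom h2 ≫ (G.map k').toFunctor.map (eqToHom h3 ≫ (α.app j').toFunctor.map φ) ≫ g' =
      eqToHom h4 ≫ g) :
    (α.app b.base).toFunctor.map (eqToHom h1 ≫ (F.map k').toFunctor.map φ) ≫
      eqToHom (objEq α b k' x') ≫ g' = eqToHom (objEq α b k x) ≫ g := by
  subst hk
  simp only [eqToHom_refl, Category.id_comp] at hw
  subst hw
  have nat := Functor.congr_hom congr($(α.naturality k').toFunctor) φ
  simp only [Cat.Hom.comp_map] at nat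
  simp only [Functor.map_comp, eqToHom_map, Category.assoc]
  rw [nat]
  simp

lemma eqToHom_comp_map_eqToHom {C D : Type} [Category.{0} C] [Category.{0} D] (Φ : C ⥤ D)
    {x y : C} (q : x = y) (p : Φ.obj y = Φ.obj x) : eqToHom p ≫ Φ.map (eqToHom q) = 𝟙 _ := by
  subst q; simp

lemma keyComp {j j' j'' : ↥I} {x : F.obj j} {x' : F.obj j'} {x'' : F.obj j''} (s1 : j ⟶ j')
    (s2 : j' ⟶ j'') (k : j ⟶ b.base) (k' : j' ⟶ b.base) (k'' : j'' ⟶ b.base)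
    (hk : s2 ≫ k'' = k') (ψf : (F.map s1).toFunctor.obj x ⟶ x')
    (χf : (F.map s2).toFunctor.obj x' ⟶ x'')
    (m1 : (F.map k).toFunctor.obj x = (F.map k'').toFunctor.obj ((F.map (s1 ≫ s2)).toFunctor.obj x))
    (e : (F.map (s1 ≫ s2)).toFunctor.obj x = (F.map s2).toFunctor.obj ((F.map s1).toFunctor.obj x))
    (m2 : (F.map k).toFunctor.obj x = (F.map k').toFunctor.obj ((F.map s1).toFunctor.obj x))
    (m3 : (F.map k').toFunctor.obj x' = (F.map k'').toFunctor.obj ((F.map s2).toFunctor.obj x')) :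
    eqToHom m1 ≫ (F.map k'').toFunctor.map (eqToHom e ≫ (F.map s2).toFunctor.map ψf ≫ χf) =
      eqToHom m2 ≫ (F.map k').toFunctor.map ψf ≫ eqToHom m3 ≫ (F.map k'').toFunctor.map χf := by
  subst hk
  rw [Functor.congr_hom congr($(F.map_comp s2 k'').toFunctor) ψf]
  simp [eqToHom_map]

def comparison : CostructuredArrow (Grothendieck.map α) b ⥤
    CostructuredArrow (α.app b.base).toFunctor b.fiber where
  obj c := CostructuredArrow.mk (Y := (F.map c.hom.base).toFunctor.obj c.left.fiber)
    (eqToHom (objEq α b c.hom.base c.left.fiber) ≫ c.hom.fiber)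
  map {c c'} ψ := CostructuredArrow.homMk
    (eqToHom (mapObjEq α b ψ) ≫ (F.map c'.hom.base).toFunctor.map ψ.left.fiber)
    (by
      simp only [CostructuredArrow.mk_hom_eq_self]
      have w := Grothendieck.congr (CostructuredArrow.w ψ)
      simp only [Grothendieck.comp_fiber, Grothendieck.map_map_fiber] at w
      exact keyMap α b _ _ _ _ _ _ (baseEq α b ψ) _ _ _ _ _ _ w)
  map_id c := by
    ext
    simp only [CostructuredArrow.homMk_left, CostructuredArrow.id_left, Grothendieck.id_fiber]
    exact eqToHom_comp_map_eqToHom _ _ _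
  map_comp {c c' c''} ψ χ := by
    ext
    have h : (F.map c'.hom.base).toFunctor =
        (F.map χ.left.base ≫ F.map c''.hom.base).toFunctor := by
      rw [← baseEq α b χ]
      exact congrArg Cat.Hom.toFunctor (F.map_comp _ _)
    simp only [CostructuredArrow.comp_left, CostructuredArrow.homMk_left,
      Grothendieck.comp_fiber, Functor.map_comp, eqToHom_map, Category.assoc]
    exact keyComp b _ _ _ _ _ (baseEq α b χ) _ _ _ _ _ _
lemma comparison_obj_hom (c : CostructuredArrow (Grothendieck.map α) b) :
    ((comparison α b).obj c).hom = eqToHom (objEq α b c.hom.base c.left.fiber) ≫ c.hom.fiber :=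
  rfl

lemma comparison_map_left {c c' : CostructuredArrow (Grothendieck.map α) b} (ψ : c ⟶ c') :
    ((comparison α b).map ψ).left =
      eqToHom (mapObjEq α b ψ) ≫ (F.map c'.hom.base).toFunctor.map ψ.left.fiber :=
  rfl

lemma map_eqToHom_comp' {C D : Type} [Category.{0} C] [Category.{0} D] (Φ : C ⥤ D)
    {x y : C} (p : x = y) {z : D} (g : Φ.obj y ⟶ z) {w : D} (q : Φ.obj x = w)
    (r : w = Φ.obj y) : Φ.map (eqToHom p) ≫ g = eqToHom q ≫ eqToHom r ≫ g := by
  subst p; simp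

lemma eqToHom_sandwich {C : Type} [Category.{0} C] {X X'' Y Y' : C} (p : X = X'') (q : X'' = X)
    (f : X ⟶ Y) (r : Y = Y') (s : Y' = Y) : (eqToHom p ≫ eqToHom q ≫ f ≫ eqToHom r) ≫ eqToHom s = f := by
  simp

lemma eqToHom3 {C : Type} [Category.{0} C] {W X Y Z V : C} (a : W = X) (b' : X = Y) (c : Y = Z)
    (d' : W = Z) (f : Z ⟶ V) : eqToHom a ≫ eqToHom b' ≫ eqToHom c ≫ f = eqToHom d' ≫ f := by
  simp

lemma eqToHom_sandwich2 {X : Cat.{0,0}} {A A'' B B' : X} (p : A = A'') (q : A'' = A) (f : A ⟶ B)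
    (r : B = B') (g : B' ⟶ B) (hg : g = eqToHom r.symm) :
    (eqToHom p ≫ eqToHom q ≫ (𝟙 X : X ⟶ X).toFunctor.map f ≫ eqToHom r) ≫ g = f := by
  subst hg; simp

lemma uniqAux {X : Cat.{0,0}} (Φ : X ⟶ X) (hΦ : Φ = 𝟙 X) {P Q R : X} (mf : P ⟶ Q) (g : R ⟶ Q)
    (a : R = Φ.toFunctor.obj P) (c : Φ.toFunctor.obj Q = Q) (h : R = P)
    (hw : (eqToHom a ≫ Φ.toFunctor.map mf) ≫ eqToHom c = g) : eqToHom h ≫ mf = g := by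
  subst hΦ; subst hw; simp

lemma keyPsi {j : ↥I} (x : F.obj j) (k : j ⟶ b.base)
    (g : (G.map k).toFunctor.obj ((α.app j).toFunctor.obj x) ⟶ b.fiber) (y : F.obj b.base)
    (dh : (α.app b.base).toFunctor.obj y ⟶ b.fiber) (u : (F.map k).toFunctor.obj x ⟶ y)
    (hw : eqToHom (objEq α b k x) ≫ g = (α.app b.base).toFunctor.map u ≫ dh)
    (p : (G.map (𝟙 b.base)).toFunctor.obj ((α.app b.base).toFunctor.obj y) =
      (α.app b.base).toFunctor.obj y) :
    (Grothendieck.map α).map (⟨k, u⟩ : (⟨j, x⟩ : Grothendieck F) ⟶ ⟨b.base, y⟩) ≫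
      (⟨𝟙 b.base, eqToHom p ≫ dh⟩ : (⟨b.base, (α.app b.base).toFunctor.obj y⟩ : Grothendieck G) ⟶ b) =
      (⟨k, g⟩ : (⟨j, (α.app j).toFunctor.obj x⟩ : Grothendieck G) ⟶ b) := by
  rw [eqToHom_comp_iff] at hw
  subst hw
  refine Grothendieck.ext _ _ (Category.comp_id _) ?_
  show eqToHom _ ≫ (eqToHom _ ≫ (G.map (𝟙 b.base)).toFunctor.map
    ((eqToHom (α.naturality k).symm).toNatTrans.app x ≫ (α.app b.base).toFunctor.map u) ≫
      eqToHom p ≫ dh) = eqToHom _ ≫ (α.app b.base).toFunctor.map u ≫ dh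
  simp only [Functor.map_comp, eqToHom_map, Cat.eqToHom_app, Category.assoc, eqToHom_trans_assoc]
  rw [Functor.congr_hom congr($(G.map_id b.base).toFunctor) ((α.app b.base).toFunctor.map u)]
  simp
  exact eqToHom3 _ _ _ _ _

namespace Terminal
variable (d : CostructuredArrow (α.app b.base).toFunctor b.fiber)

def tLeft : CostructuredArrow (Grothendieck.map α) b :=
  CostructuredArrow.mk (Y := (⟨b.base, d.left⟩ : Grothendieck F))
    { base := 𝟙 b.base
      fiber := eqToHom (congrArg (fun f => f.toFunctor.obj ((α.app b.base).toFunctor.obj d.left)) (G.map_id b.base)) ≫ d.hom }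

@[simp] lemma tLeft_hom_base : (tLeft α b d).hom.base = 𝟙 b.base := rfl

@[simp] lemma tLeft_hom_fiber : (tLeft α b d).hom.fiber =
    eqToHom (congrArg (fun f => f.toFunctor.obj ((α.app b.base).toFunctor.obj d.left)) (G.map_id b.base)) ≫ d.hom := rfl

def t : CostructuredArrow (comparison α b) d :=
  CostructuredArrow.mk (Y := tLeft α b d)
    (CostructuredArrow.homMk (eqToHom (congrArg (fun f => f.toFunctor.obj d.left) (F.map_id b.base)))
      (by simp [comparison, tLeft, eqToHom_map]; exact map_eqToHom_comp' _ _ _ _ _))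

def tPsi (e : CostructuredArrow (comparison α b) d) : e.left ⟶ tLeft α b d :=
  CostructuredArrow.homMk (⟨e.left.hom.base, e.hom.left⟩ : e.left.left ⟶ (tLeft α b d).left)
    (by
      have hw := (CostructuredArrow.w e.hom).symm
      exact keyPsi α b _ _ _ _ _ _ hw _)

@[simp] lemma tPsi_left (e : CostructuredArrow (comparison α b) d) :
    (tPsi α b d e).left = ⟨e.left.hom.base, e.hom.left⟩ := rfl

def toT (e : CostructuredArrow (comparison α b) d) : e ⟶ t α b d :=
  CostructuredArrow.homMk (tPsi α b d e)
    (by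
      apply CostructuredArrow.hom_ext
      simp only [CostructuredArrow.comp_left, comparison_map_left, t, tPsi,
        CostructuredArrow.homMk_left, Category.assoc]
      erw [Functor.congr_hom congr($(F.map_id b.base).toFunctor) e.hom.left]
      exact eqToHom_sandwich2 _ _ _ _ _ rfl)

lemma uniq (e : CostructuredArrow (comparison α b) d) (m : e ⟶ t α b d) : m = toT α b d e := by
  have hbase : m.left.left.base = e.left.hom.base := by
    have h := baseEq α b m.left
    simpa [t, tLeft] using h
  have hw := congrArg CommaMorphism.left (CostructuredArrow.w m)
  simp only [CostructuredArrow.comp_left, comparison_map_left, t,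
    CostructuredArrow.mk_hom_eq_self, CostructuredArrow.homMk_left, Category.assoc] at hw
  apply CostructuredArrow.hom_ext
  apply CostructuredArrow.hom_ext
  refine Grothendieck.ext _ _ hbase ?_
  exact uniqAux _ (F.map_id b.base) _ _ _ _ _ hw

end Terminal

/-- If a natural transformation `α : F ⟶ G` between functors `I ⥤ Cat` is componentwise
aspheric, then the induced functor `∫F ⥤ ∫G` between the Grothendieck constructions is
aspheric. -/
theorem grothendieck_map_aspheric (𝒜 : Set Cat.{0,0})
    (h𝒜 : IsRightAsphericityStructure 𝒜) {I : Cat.{0,0}} (F G : ↥I ⥤ Cat.{0,0})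
    (α : F ⟶ G) (hα : ∀ i : I, Aspheric 𝒜 (α.app i).toFunctor) :
    Aspheric 𝒜 (A := Cat.of (Grothendieck F)) (B := Cat.of (Grothendieck G))
      (Grothendieck.map α) := by
  obtain ⟨as1, as2⟩ := h𝒜
  intro b
  refine as2 _ (Cat.of (CostructuredArrow (α.app b.base).toFunctor b.fiber)) (comparison α b)
    (hα b.base b.fiber) ?_
  intro d
  exact as1 _
    (IsTerminal.hasTerminal (IsTerminal.ofUniqueHom (Terminal.toT α b d) (Terminal.uniq α b d)))

end Paper
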